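/- Let G be a finite connected simple graph with at least three vertices, and let δ ∈ (0,1] be a real number satisfying H(G,δ) = 1 (equivalently, δ is the unique positive root of the modified Hosoya polynomial H*(G,x) = 1 − H(G,x)). Then δ > 1/(MH(G) + 1). -/
import Mathlib


open scoped Classical in
/-- The Hosoya polynomial `H(G,x)` of a finite simple graph `G`, as a function of `x`:
the sum over unordered pairs of distinct vertices of `x ^ d(a,b)` (no constant term). -/
noncomputable def hosoyaPoly {V : Type*} [Fintype V] (G : SimpleGraph V) (x : ℝ) : ℝ :=
  ∑ p ∈ Finset.univ.filter (fun p : Sym2 V => ¬ p.IsDiag),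
    Sym2.lift ⟨fun a b => x ^ G.dist a b,
      fun a b => by dsimp only; rw [SimpleGraph.dist_comm]⟩ p

open scoped Classical in
/-- `d_k(G)`: the number of unordered pairs of distinct vertices of `G` at distance exactly `k`. -/
noncomputable def distPairs {V : Type*} [Fintype V] (G : SimpleGraph V) (k : ℕ) : ℕ :=
  (Finset.univ.filter (fun p : Sym2 V => ¬ p.IsDiag ∧
    Sym2.lift ⟨fun a b => G.dist a b, fun _ _ => SimpleGraph.dist_comm⟩ p = k)).card

/-- `MH(G) = max { d_k(G) : k ≥ 1 }`. -/
noncomputable def maxDistPairs {V : Type*} [Fintype V] (G : SimpleGraph V) : ℕ :=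
  sSup {m : ℕ | ∃ k, 1 ≤ k ∧ distPairs G k = m}

/-- **Theorem.** Let `G` be a finite connected simple graph with at least three vertices and let `δ ∈ (0,1]` satisfy `H(G,δ) = 1` (i.e., `δ` is the unique positive root of `H*(G,x) = 1 - H(G,x)`). Then `δ > 1 / (MH(G) + 1)`. -/
theorem wiener_root_index_lower_bound {V : Type*} [Fintype V] (G : SimpleGraph V)
    (hconn : G.Connected) (hcard : 3 ≤ Fintype.card V)
    (δ : ℝ) (hδ : δ ∈ Set.Ioc (0 : ℝ) 1)
    (hroot : hosoyaPoly G δ = 1) :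
    1 / ((maxDistPairs G : ℝ) + 1) < δ := by
  classical
  by_contra hle
  push_neg at hle
  set M := maxDistPairs G with hMdef
  have hδ0 : 0 < δ := hδ.1
  -- the set defining M is bounded above
  have hbdd : BddAbove {m : ℕ | ∃ k, 1 ≤ k ∧ distPairs G k = m} := by
    refine ⟨Fintype.card (Sym2 V), ?_⟩
    rintro m ⟨k, -, rfl⟩
    exact le_of_le_of_eq (Finset.card_filter_le _ _) Finset.card_univ
  have hdk_le : ∀ k, 1 ≤ k → distPairs G k ≤ M := fun k hk =>
    le_csSup hbdd ⟨k, hk, rfl⟩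
  -- M ≥ 1
  have hM1 : 1 ≤ M := by
    obtain ⟨a, b, hab⟩ := (Fintype.one_lt_card_iff (α := V)).mp (by omega)
    have hk1 : 1 ≤ G.dist a b := hconn.pos_dist_of_ne hab
    refine le_trans ?_ (hdk_le (G.dist a b) hk1)
    rw [distPairs]
    refine Finset.card_pos.mpr ⟨s(a, b), ?_⟩
    simp only [Finset.mem_filter, Finset.mem_univ, true_and, Sym2.lift_mk,
      Sym2.isDiag_iff_proj_eq]
    exact ⟨hab, trivial⟩
  have hM1' : (1 : ℝ) ≤ (M : ℝ) := by exact_mod_cast hM1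
  have hM0 : (0 : ℝ) < (M : ℝ) := by linarith
  -- δ < 1
  have hδ1 : δ < 1 := by
    have h2 : 1 / ((M : ℝ) + 1) ≤ 1 / 2 :=
      one_div_le_one_div_of_le (by norm_num) (by linarith)
    linarith
  set N := Fintype.card V with hNdef
  -- rewrite the Hosoya polynomial as a sum over distances
  have hdist_lt : ∀ a b : V, a ≠ b → 1 ≤ G.dist a b ∧ G.dist a b ≤ N := by
    intro a b hab
    refine ⟨hconn.pos_dist_of_ne hab, ?_⟩
    obtain ⟨p, hp, hlen⟩ := hconn.exists_path_of_dist a b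
    have := hp.length_lt
    omega
  have hH : hosoyaPoly G δ = ∑ k ∈ Finset.Icc 1 N, (distPairs G k : ℝ) * δ ^ k := by
    rw [hosoyaPoly]
    rw [← Finset.sum_fiberwise_of_maps_to (g := fun p : Sym2 V =>
      Sym2.lift ⟨fun a b => G.dist a b, fun _ _ => SimpleGraph.dist_comm⟩ p)
      (t := Finset.Icc 1 N) ?_]
    · refine Finset.sum_congr rfl fun k _ => ?_
      rw [distPairs, Finset.filter_filter]
      rw [Finset.sum_congr rfl (g := fun _ => δ ^ k) ?_, Finset.sum_const, nsmul_eq_mul]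
      intro p hp
      simp only [Finset.mem_filter] at hp
      induction p with
      | h a b =>
        simp only [Sym2.lift_mk] at hp ⊢
        rw [hp.2.2]
    · intro p hp
      simp only [Finset.mem_filter, Finset.mem_univ, true_and] at hp
      induction p with
      | h a b =>
        simp only [Sym2.lift_mk, Finset.mem_Icc]
        rw [Sym2.isDiag_iff_proj_eq] at hp
        exact hdist_lt a b hp
  -- bound: H(G,δ) ≤ M * ∑ δ^k < M * δ/(1-δ) ≤ 1
  have hsum_le : hosoyaPoly G δ ≤ (M : ℝ) * ∑ k ∈ Finset.Icc 1 N, δ ^ k := by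
    rw [hH, Finset.mul_sum]
    refine Finset.sum_le_sum fun k hk => ?_
    have hk1 : 1 ≤ k := (Finset.mem_Icc.mp hk).1
    have : (distPairs G k : ℝ) ≤ (M : ℝ) := by exact_mod_cast hdk_le k hk1
    exact mul_le_mul_of_nonneg_right this (pow_nonneg hδ0.le k)
  have hgeom : ∑ k ∈ Finset.Icc 1 N, δ ^ k < δ / (1 - δ) := by
    have h1δ : 0 < 1 - δ := by linarith
    have hrw : ∑ k ∈ Finset.Icc 1 N, δ ^ k = δ * ∑ k ∈ Finset.range N, δ ^ k := by
      rw [show Finset.Icc 1 N = Finset.Ico 1 (N + 1) by rw [Finset.Ico_add_one_right_eq_Icc]]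
      rw [Finset.sum_Ico_eq_sum_range]
      simp only [Nat.add_sub_cancel]
      rw [Finset.mul_sum]
      exact Finset.sum_congr rfl fun i _ => by rw [pow_add, pow_one]
    rw [hrw, div_eq_mul_inv]
    refine mul_lt_mul_of_pos_left ?_ hδ0
    rw [geom_sum_eq (ne_of_lt hδ1) N]
    have hpow : 0 < δ ^ N := pow_pos hδ0 N
    have heq : (δ ^ N - 1) / (δ - 1) = (1 - δ ^ N) / (1 - δ) := by
      rw [div_eq_div_iff (by linarith) (by linarith)]; ring
    rw [heq, div_lt_iff₀ h1δ, inv_mul_cancel₀ (ne_of_gt h1δ)]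
    linarith
  have hfrac : δ / (1 - δ) ≤ 1 / (M : ℝ) := by
    rw [div_le_div_iff₀ (by linarith) hM0]
    have h1 : δ * ((M : ℝ) + 1) ≤ 1 := (le_div_iff₀ (by linarith)).mp hle
    nlinarith
  have : hosoyaPoly G δ < 1 := by
    calc hosoyaPoly G δ ≤ (M : ℝ) * ∑ k ∈ Finset.Icc 1 N, δ ^ k := hsum_le
      _ < (M : ℝ) * (δ / (1 - δ)) := by
          exact mul_lt_mul_of_pos_left hgeom hM0
      _ ≤ (M : ℝ) * (1 / (M : ℝ)) := by
          exact mul_le_mul_of_nonneg_left hfrac hM0.le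
      _ = 1 := by field_simp
  linarith [hroot]
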